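/- arXiv:2307.04426 — 2 statements merged into one kernel-verified Lean document; each statement's English description precedes it below -/
import Mathlib

section
/- Let g : ℝ⁴ → ℝ be a bounded continuous function and let ρ > 0. Then lim_{δ→0⁺} (1/|ln δ|) · ∫_{B(0,ρ/δ)} g(δt) · (|t|²−1)/(1+|t|²)³ dt = 2π² · g(0). -/
open MeasureTheory Real Filter

noncomputable section

/-- Euclidean space ℝ⁴. -/
abbrev E4 := EuclideanSpace ℝ (Fin 4)



lemma E4_vol_ball : (volume (Metric.ball (0 : E4) 1)).toReal = π ^ 2 / 2 := by
  rw [EuclideanSpace.volume_ball]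
  have h3 : Real.Gamma ((Fintype.card (Fin 4) : ℝ) / 2 + 1) = 2 := by norm_num
  rw [h3]
  have : Real.sqrt π ^ Fintype.card (Fin 4) = π ^ 2 := by
    rw [Fintype.card_fin, show (4:ℕ) = 2*2 by norm_num, pow_mul, Real.sq_sqrt pi_pos.le]
  rw [this]
  simp [ENNReal.toReal_ofReal (by positivity : (0:ℝ) ≤ π ^ 2 / 2)]

lemma E4_polar (f : ℝ → ℝ) (R : ℝ) (hR : 0 < R) :
    ∫ t in Metric.ball (0 : E4) R, f ‖t‖ =
      2 * π ^ 2 * ∫ r in (0:ℝ)..R, r ^ 3 * f r := by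
  have hind : ∀ t : E4, (Metric.ball (0:E4) R).indicator (fun t => f ‖t‖) t
      = (Set.Iio R).indicator f ‖t‖ := by
    intro t
    by_cases h : ‖t‖ < R <;>
      simp [Set.indicator_apply, mem_ball_zero_iff, Set.mem_Iio, h]
  rw [← integral_indicator measurableSet_ball]
  simp_rw [hind]
  rw [MeasureTheory.integral_fun_norm_addHaar volume ((Set.Iio R).indicator f)]
  have hdim : Module.finrank ℝ E4 = 4 := finrank_euclideanSpace_fin
  rw [hdim, measureReal_def, E4_vol_ball]
  have : ∀ r : ℝ, r ^ (4-1) • (Set.Iio R).indicator f r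
      = (Set.Iio R).indicator (fun r => r ^ 3 * f r) r := by
    intro r
    simp only [Set.indicator_apply, smul_eq_mul]
    split <;> simp
  simp_rw [this]
  rw [setIntegral_indicator measurableSet_Iio, Set.Ioi_inter_Iio,
    intervalIntegral.integral_of_le hR.le, ← integral_Ioc_eq_integral_Ioo]
  simp only [nsmul_eq_mul, smul_eq_mul]
  ring

def Fa (r : ℝ) : ℝ := (Real.log (1+r^2) + 3*(1+r^2)⁻¹ - ((1+r^2)^2)⁻¹)/2
def Ga (r : ℝ) : ℝ := (Real.log (1+r^2) + (1+r^2)⁻¹)/2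

lemma cont_w : Continuous (fun r : ℝ => r^3 * ((r^2-1)/(1+r^2)^3)) := by
  apply Continuous.mul (by continuity)
  exact Continuous.div (by continuity) (by continuity) (fun x => by positivity)

lemma cont_W : Continuous (fun r : ℝ => r^3 * (((1+r^2)^2)⁻¹)) := by
  apply Continuous.mul (by continuity)
  exact Continuous.inv₀ (by continuity) (fun x => by positivity)

lemma hasDerivAt_Fa (r : ℝ) : HasDerivAt Fa (r^3 * ((r^2-1)/(1+r^2)^3)) r := by
  have h0 : (0:ℝ) < 1 + r^2 := by positivity
  have h1 : HasDerivAt (fun r:ℝ => 1+r^2) (2*r) r := by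
    simpa using (hasDerivAt_pow 2 r).const_add 1
  have hlog := h1.log h0.ne'
  have hinv := h1.inv h0.ne'
  have hsq := h1.pow 2
  have hinv2 := hsq.inv (pow_ne_zero 2 h0.ne')
  have hF := ((hlog.add (hinv.const_mul 3)).sub hinv2).div_const 2
  refine HasDerivAt.congr_deriv hF ?_
  simp only [Pi.pow_apply]
  field_simp
  ring

lemma hasDerivAt_Ga (r : ℝ) : HasDerivAt Ga (r^3 * (((1+r^2)^2)⁻¹)) r := by
  have h0 : (0:ℝ) < 1 + r^2 := by positivity
  have h1 : HasDerivAt (fun r:ℝ => 1+r^2) (2*r) r := by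
    simpa using (hasDerivAt_pow 2 r).const_add 1
  have hlog := h1.log h0.ne'
  have hinv := h1.inv h0.ne'
  have hG := (hlog.add hinv).div_const 2
  refine HasDerivAt.congr_deriv hG ?_
  field_simp
  ring

lemma integral_w_line (R : ℝ) :
    ∫ r in (0:ℝ)..R, r^3 * ((r^2-1)/(1+r^2)^3) = Fa R - 1 := by
  rw [intervalIntegral.integral_eq_sub_of_hasDerivAt
    (fun r _ => hasDerivAt_Fa r) (cont_w.intervalIntegrable 0 R)]
  have : Fa 0 = 1 := by norm_num [Fa]
  rw [this]

lemma integral_W_line (R : ℝ) :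
    ∫ r in (0:ℝ)..R, r^3 * (((1+r^2)^2)⁻¹) = Ga R - 1/2 := by
  rw [intervalIntegral.integral_eq_sub_of_hasDerivAt
    (fun r _ => hasDerivAt_Ga r) (cont_W.intervalIntegrable 0 R)]
  have : Ga 0 = 1/2 := by norm_num [Ga]
  rw [this]

lemma contw4 : Continuous (fun t : E4 => (‖t‖^2-1)/(1+‖t‖^2)^3) :=
  Continuous.div (by continuity) (by continuity) (fun x => by positivity)

lemma contW4 : Continuous (fun t : E4 => ((1+‖t‖^2)^2)⁻¹) :=
  Continuous.inv₀ (by continuity) (fun x => by positivity)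

lemma integrableOn_ball_of_continuous {f : E4 → ℝ} (hf : Continuous f) (R : ℝ) :
    IntegrableOn f (Metric.ball (0:E4) R) :=
  (hf.continuousOn.integrableOn_compact (isCompact_closedBall 0 R)).mono_set
    Metric.ball_subset_closedBall

lemma hw_abs (t : E4) : |(‖t‖^2-1)/(1+‖t‖^2)^3| ≤ ((1+‖t‖^2)^2)⁻¹ := by
  have h0 : (0:ℝ) < 1 + ‖t‖^2 := by positivity
  rw [abs_div, abs_of_pos (by positivity : (0:ℝ) < (1+‖t‖^2)^3),
    div_le_iff₀ (by positivity : (0:ℝ) < (1+‖t‖^2)^3)]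
  have h1 : |‖t‖^2 - 1| ≤ 1 + ‖t‖^2 := by
    rw [abs_le]; constructor <;> nlinarith [sq_nonneg ‖t‖]
  calc |‖t‖^2-1| ≤ 1 + ‖t‖^2 := h1
    _ = ((1+‖t‖^2)^2)⁻¹ * (1+‖t‖^2)^3 := by field_simp

lemma integral_w_ball (R : ℝ) (hR : 0 < R) :
    ∫ t in Metric.ball (0:E4) R, (‖t‖^2-1)/(1+‖t‖^2)^3 = 2*π^2*(Fa R - 1) := by
  rw [E4_polar (fun r => (r^2-1)/(1+r^2)^3) R hR, integral_w_line]

lemma integral_W_ball (R : ℝ) (hR : 0 < R) :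
    ∫ t in Metric.ball (0:E4) R, ((1+‖t‖^2)^2)⁻¹ = 2*π^2*(Ga R - 1/2) := by
  rw [E4_polar (fun r => ((1+r^2)^2)⁻¹) R hR, integral_W_line]

lemma one_add_div_sq (ρ δ : ℝ) (hδ : 0 < δ) : 1 + (ρ/δ)^2 = (δ^2+ρ^2)/δ^2 := by
  field_simp

lemma log_one_add_div_sq (ρ δ : ℝ) (hρ : 0 < ρ) (hδ : 0 < δ) :
    Real.log (1 + (ρ/δ)^2) = Real.log (δ^2+ρ^2) - 2*Real.log δ := by
  rw [one_add_div_sq ρ δ hδ, Real.log_div (by positivity) (by positivity), Real.log_pow]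
  push_cast; ring

lemma inv_one_add_div_sq (ρ δ : ℝ) (hδ : 0 < δ) :
    (1 + (ρ/δ)^2)⁻¹ = δ^2/(δ^2+ρ^2) := by
  rw [one_add_div_sq ρ δ hδ, inv_div]

lemma Fa_rw (ρ δ : ℝ) (hρ : 0 < ρ) (hδ : 0 < δ) :
    Fa (ρ/δ) = (Real.log (δ^2+ρ^2) + 3*(δ^2/(δ^2+ρ^2)) - (δ^2/(δ^2+ρ^2))^2)/2
      - Real.log δ := by
  rw [Fa, log_one_add_div_sq ρ δ hρ hδ, ← inv_pow, inv_one_add_div_sq ρ δ hδ]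
  ring

lemma Ga_rw (ρ δ : ℝ) (hρ : 0 < ρ) (hδ : 0 < δ) :
    Ga (ρ/δ) = (Real.log (δ^2+ρ^2) + δ^2/(δ^2+ρ^2))/2 - Real.log δ := by
  rw [Ga, log_one_add_div_sq ρ δ hρ hδ, inv_one_add_div_sq ρ δ hδ]
  ring

lemma err_bound (g : E4 → ℝ) (hg : Continuous g) (M ε' η ρ δ : ℝ)
    (hM : ∀ x, |g x| ≤ M) (hε' : 0 ≤ ε') (hη : 0 < η) (hηρ : η ≤ ρ) (hδ0 : 0 < δ)
    (hηg : ∀ x : E4, ‖x‖ < η → |g x - g 0| ≤ ε') :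
    |∫ t in Metric.ball (0:E4) (ρ/δ), (g (δ • t) - g 0) * ((‖t‖^2-1)/(1+‖t‖^2)^3)|
      ≤ ε' * (2*π^2*(Ga (ρ/δ) - 1/2))
        + 2*M*((2*π^2*(Ga (ρ/δ) - 1/2)) - (2*π^2*(Ga (η/δ) - 1/2))) := by
  have hM0 : 0 ≤ M := le_trans (abs_nonneg _) (hM 0)
  set W : E4 → ℝ := fun t => ((1+‖t‖^2)^2)⁻¹ with hW
  set B := Metric.ball (0:E4) (ρ/δ)
  set S := Metric.ball (0:E4) (η/δ)
  have hsub : S ⊆ B := Metric.ball_subset_ball (by gcongr)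
  have hWint : IntegrableOn W B := integrableOn_ball_of_continuous contW4 _
  have hind_int : Integrable (Sᶜ.indicator W) (volume.restrict B) :=
    hWint.indicator measurableSet_ball.compl
  have hbnd : Integrable (fun t => ε' * W t + 2*M*(Sᶜ.indicator W t)) (volume.restrict B) :=
    (hWint.const_mul ε').add (hind_int.const_mul (2*M))
  have hpt : ∀ t : E4, ‖(g (δ • t) - g 0) * ((‖t‖^2-1)/(1+‖t‖^2)^3)‖
      ≤ ε' * W t + 2*M*(Sᶜ.indicator W t) := by
    intro t
    rw [Real.norm_eq_abs, abs_mul]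
    have hW0 : (0:ℝ) ≤ W t := by positivity
    by_cases ht : ‖t‖ < η/δ
    · have h1 : |g (δ • t) - g 0| ≤ ε' := by
        apply hηg
        rw [norm_smul, Real.norm_eq_abs, abs_of_pos hδ0, mul_comm]
        exact (lt_div_iff₀ hδ0).mp ht
      have hind : Sᶜ.indicator W t = 0 :=
        Set.indicator_of_notMem (by simpa [S, mem_ball_zero_iff] using ht) _
      rw [hind]
      have := mul_le_mul h1 (hw_abs t) (abs_nonneg _) hε'
      linarith
    · have hind : Sᶜ.indicator W t = W t :=
        Set.indicator_of_mem (by simpa [S, mem_ball_zero_iff] using ht) _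
      rw [hind]
      have h1 : |g (δ • t) - g 0| ≤ 2*M := by
        calc |g (δ • t) - g 0| ≤ |g (δ • t)| + |g 0| := abs_sub _ _
          _ ≤ M + M := add_le_add (hM _) (hM 0)
          _ = 2*M := by ring
      have h2 := mul_le_mul h1 (hw_abs t) (abs_nonneg _) (by linarith)
      nlinarith [mul_nonneg hε' hW0]
  have hstep : |∫ t in B, (g (δ • t) - g 0) * ((‖t‖^2-1)/(1+‖t‖^2)^3)|
      ≤ ∫ t in B, (ε' * W t + 2*M*(Sᶜ.indicator W t)) := by
    simpa using norm_integral_le_of_norm_le hbnd (Eventually.of_forall hpt)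
  have hindI : ∫ t in B, Sᶜ.indicator W t
      = (2*π^2*(Ga (ρ/δ) - 1/2)) - (2*π^2*(Ga (η/δ) - 1/2)) := by
    have h1 : ∫ t in B, Sᶜ.indicator W t = (∫ t in B, W t) - ∫ t in B, S.indicator W t := by
      rw [← integral_sub hWint (hWint.indicator measurableSet_ball)]
      congr 1
      ext t
      rw [Set.indicator_compl]
      simp
      rfl
    rw [h1, setIntegral_indicator measurableSet_ball,
      Set.inter_eq_self_of_subset_right hsub]
    rw [show (∫ t in B, W t) = 2*π^2*(Ga (ρ/δ) - 1/2) from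
        integral_W_ball _ (div_pos (lt_of_lt_of_le hη hηρ) hδ0),
      show (∫ t in S, W t) = 2*π^2*(Ga (η/δ) - 1/2) from integral_W_ball _ (div_pos hη hδ0)]
  calc |∫ t in B, (g (δ • t) - g 0) * ((‖t‖^2-1)/(1+‖t‖^2)^3)|
      ≤ ∫ t in B, (ε' * W t + 2*M*(Sᶜ.indicator W t)) := hstep
    _ = ε' * (∫ t in B, W t) + 2*M*(∫ t in B, Sᶜ.indicator W t) := by
        rw [integral_add (hWint.const_mul ε') (hind_int.const_mul (2*M)),
          integral_const_mul, integral_const_mul]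
    _ = _ := by
        rw [hindI, show (∫ t in B, W t) = 2*π^2*(Ga (ρ/δ) - 1/2) from
          integral_W_ball _ (div_pos (lt_of_lt_of_le hη hηρ) hδ0)]

def Qa (ρ δ : ℝ) : ℝ :=
  (Real.log (δ^2+ρ^2) + 3*(δ^2/(δ^2+ρ^2)) - (δ^2/(δ^2+ρ^2))^2)/2 - 1

lemma Fa_sub_one (ρ δ : ℝ) (hρ : 0 < ρ) (hδ : 0 < δ) :
    Fa (ρ/δ) - 1 = Qa ρ δ - Real.log δ := by
  rw [Fa_rw ρ δ hρ hδ, Qa]; ring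

lemma Qa_contAt (ρ : ℝ) (hρ : 0 < ρ) : ContinuousAt (Qa ρ) 0 := by
  have h1 : Continuous (fun δ : ℝ => δ^2+ρ^2) := by continuity
  have hA : ContinuousAt (fun δ : ℝ => Real.log (δ^2+ρ^2)) 0 :=
    (Real.continuousAt_log (by positivity)).comp h1.continuousAt
  have hB : ContinuousAt (fun δ : ℝ => δ^2/(δ^2+ρ^2)) 0 :=
    ContinuousAt.div (by fun_prop) h1.continuousAt (by positivity)
  exact (((hA.add (hB.const_mul 3)).sub (hB.pow 2)).div_const 2).sub continuousAt_const


set_option maxHeartbeats 1000000 in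
/-- If g : ℝ⁴ → ℝ is bounded and continuous and ρ > 0, then
(1/|ln δ|) ∫_{B(0,ρ/δ)} g(δt) (|t|²−1)/(1+|t|²)³ dt → 2π² g(0) as δ → 0⁺. -/
theorem integral_scaled_limit_log (g : E4 → ℝ) (hg : Continuous g)
    (hb : ∃ M : ℝ, ∀ x : E4, |g x| ≤ M) (ρ : ℝ) (hρ : 0 < ρ) :
    Tendsto
      (fun δ : ℝ =>
        (1 / |Real.log δ|) *
          ∫ t in Metric.ball (0 : E4) (ρ / δ), g (δ • t) * ((‖t‖ ^ 2 - 1) / (1 + ‖t‖ ^ 2) ^ 3))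
      (nhdsWithin 0 (Set.Ioi 0)) (nhds (2 * π ^ 2 * g 0)) := by
  obtain ⟨M, hM⟩ := hb
  have hM0 : 0 ≤ M := le_trans (abs_nonneg _) (hM 0)
  have hπ2 : (0:ℝ) < π^2 := by positivity
  have hIoo : Set.Ioo (0:ℝ) 1 ∈ nhdsWithin (0:ℝ) (Set.Ioi 0) :=
    Ioo_mem_nhdsGT zero_lt_one
  have hLinf : Tendsto (fun δ : ℝ => |Real.log δ|) (nhdsWithin 0 (Set.Ioi 0)) atTop :=
    tendsto_abs_atBot_atTop.comp Real.tendsto_log_nhdsGT_zero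
  have hLinv : Tendsto (fun δ : ℝ => 1/|Real.log δ|) (nhdsWithin 0 (Set.Ioi 0)) (nhds 0) := by
    simpa [one_div, Pi.inv_def] using hLinf.inv_tendsto_atTop
  have hsplit : (fun δ : ℝ => (1 / |Real.log δ|) *
        ∫ t in Metric.ball (0 : E4) (ρ / δ), g (δ • t) * ((‖t‖ ^ 2 - 1) / (1 + ‖t‖ ^ 2) ^ 3))
      = fun δ : ℝ => (1 / |Real.log δ|) * (g 0 * (2*π^2*(Fa (ρ/δ) - 1)))
        + (1 / |Real.log δ|) *
          ((∫ t in Metric.ball (0 : E4) (ρ / δ), g (δ • t) * ((‖t‖ ^ 2 - 1) / (1 + ‖t‖ ^ 2) ^ 3))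
            - g 0 * (2*π^2*(Fa (ρ/δ) - 1))) := by
    funext δ; ring
  rw [hsplit]
  -- Part 1
  have hQL : Tendsto (fun δ : ℝ => Qa ρ δ * (1/|Real.log δ|)) (nhdsWithin 0 (Set.Ioi 0))
      (nhds (Qa ρ 0 * 0)) :=
    (((Qa_contAt ρ hρ).tendsto).mono_left nhdsWithin_le_nhds).mul hLinv
  have T1' : Tendsto (fun δ : ℝ => g 0 * (2*π^2) * (Qa ρ δ * (1/|Real.log δ|) + 1))
      (nhdsWithin 0 (Set.Ioi 0)) (nhds (g 0 * (2*π^2) * (Qa ρ 0 * 0 + 1))) :=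
    tendsto_const_nhds.mul (hQL.add tendsto_const_nhds)
  have hev1 : ∀ᶠ δ in nhdsWithin (0:ℝ) (Set.Ioi 0),
      g 0 * (2*π^2) * (Qa ρ δ * (1/|Real.log δ|) + 1)
        = (1 / |Real.log δ|) * (g 0 * (2*π^2*(Fa (ρ/δ) - 1))) := by
    filter_upwards [hIoo] with δ hδ
    obtain ⟨hδ0, hδ1⟩ := hδ
    have hlδ : Real.log δ < 0 := Real.log_neg hδ0 hδ1
    have hL : |Real.log δ| = -Real.log δ := abs_of_neg hlδ
    rw [Fa_sub_one ρ δ hρ hδ0, hL]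
    field_simp [hlδ.ne]
    ring
  have T1 : Tendsto (fun δ : ℝ => (1 / |Real.log δ|) * (g 0 * (2*π^2*(Fa (ρ/δ) - 1))))
      (nhdsWithin 0 (Set.Ioi 0)) (nhds (2 * π ^ 2 * g 0)) := by
    have := T1'.congr' hev1
    have hval : g 0 * (2*π^2) * (Qa ρ 0 * 0 + 1) = 2 * π ^ 2 * g 0 := by ring
    rwa [hval] at this
  -- Part 2
  have T2 : Tendsto (fun δ : ℝ => (1 / |Real.log δ|) *
      ((∫ t in Metric.ball (0 : E4) (ρ / δ), g (δ • t) * ((‖t‖ ^ 2 - 1) / (1 + ‖t‖ ^ 2) ^ 3))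
        - g 0 * (2*π^2*(Fa (ρ/δ) - 1)))) (nhdsWithin 0 (Set.Ioi 0)) (nhds 0) := by
    rw [NormedAddCommGroup.tendsto_nhds_zero]
    intro ε hε
    set ε' := ε/(8*π^2) with hε'def
    have hε'pos : 0 < ε' := by positivity
    obtain ⟨η0, hη0pos, hη0g⟩ := Metric.continuousAt_iff.mp hg.continuousAt ε' hε'pos
    set η := min (min η0 ρ) 1 with hηdef
    have hη : 0 < η := lt_min (lt_min hη0pos hρ) zero_lt_one
    have hηρ : η ≤ ρ := le_trans (min_le_left _ _) (min_le_right _ _)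
    have hη1 : η ≤ 1 := min_le_right _ _
    have hηg : ∀ x : E4, ‖x‖ < η → |g x - g 0| ≤ ε' := by
      intro x hx
      have h1 : dist x 0 < η0 := by
        rw [dist_zero_right]
        exact lt_of_lt_of_le hx (le_trans (min_le_left _ _) (min_le_left _ _))
      have := hη0g h1
      rw [Real.dist_eq] at this
      exact this.le
    set Cη := Real.log (1+ρ^2) - 2*Real.log η with hCηdef
    set C1 := ε'*(π^2*Real.log (1+ρ^2)) + 2*M*(π^2*Cη) with hC1def
    have hBt : Tendsto (fun δ : ℝ => C1*(1/|Real.log δ|) + 2*ε'*π^2)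
        (nhdsWithin 0 (Set.Ioi 0)) (nhds (C1*0 + 2*ε'*π^2)) :=
      (tendsto_const_nhds.mul hLinv).add tendsto_const_nhds
    have hlim : C1*0 + 2*ε'*π^2 < ε := by
      have : C1*0 + 2*ε'*π^2 = ε/4 := by
        rw [hε'def]; field_simp; ring
      rw [this]; linarith
    have hBlt : ∀ᶠ δ in nhdsWithin (0:ℝ) (Set.Ioi 0),
        C1*(1/|Real.log δ|) + 2*ε'*π^2 < ε := hBt.eventually (gt_mem_nhds hlim)
    filter_upwards [hIoo, hBlt] with δ hδ hBδ
    obtain ⟨hδ0, hδ1⟩ := hδ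
    have hρδ : 0 < ρ/δ := div_pos hρ hδ0
    have hP1 : (0:ℝ) < δ^2+ρ^2 := add_pos_of_nonneg_of_pos (sq_nonneg δ) (pow_pos hρ 2)
    have hηδ : 0 < η/δ := div_pos hη hδ0
    have hP2 : (0:ℝ) < δ^2+η^2 := add_pos_of_nonneg_of_pos (sq_nonneg δ) (pow_pos hη 2)
    have hlδ : Real.log δ < 0 := Real.log_neg hδ0 hδ1
    have hL : |Real.log δ| = -Real.log δ := abs_of_neg hlδ
    have hLpos : 0 < |Real.log δ| := abs_pos.mpr hlδ.ne
    -- rewrite error as single integral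
    have hw_int : IntegrableOn (fun t : E4 => g (δ • t) * ((‖t‖^2-1)/(1+‖t‖^2)^3))
        (Metric.ball (0:E4) (ρ/δ)) :=
      integrableOn_ball_of_continuous ((hg.comp (continuous_const_smul δ)).mul contw4) _
    have hw2 : IntegrableOn (fun t : E4 => g 0 * ((‖t‖^2-1)/(1+‖t‖^2)^3))
        (Metric.ball (0:E4) (ρ/δ)) :=
      (integrableOn_ball_of_continuous contw4 _).const_mul (g 0)
    have hErr : (∫ t in Metric.ball (0 : E4) (ρ / δ),
          g (δ • t) * ((‖t‖ ^ 2 - 1) / (1 + ‖t‖ ^ 2) ^ 3)) - g 0 * (2*π^2*(Fa (ρ/δ) - 1))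
        = ∫ t in Metric.ball (0:E4) (ρ/δ), (g (δ • t) - g 0) * ((‖t‖^2-1)/(1+‖t‖^2)^3) := by
      rw [← integral_w_ball _ hρδ, ← integral_const_mul, ← integral_sub hw_int hw2]
      congr 1
      ext t
      ring
    rw [hErr]
    -- scalar inequalities
    have hd1 : δ^2/(δ^2+ρ^2) ≤ 1 := by
      rw [div_le_one hP1]; linarith [sq_nonneg ρ]
    have hlog1 : Real.log (δ^2+ρ^2) ≤ Real.log (1+ρ^2) :=
      Real.log_le_log hP1 (by nlinarith)
    have hA : 2*(Ga (ρ/δ) - 1/2) ≤ Real.log (1+ρ^2) + 2*|Real.log δ| := by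
      rw [Ga_rw ρ δ hρ hδ0, hL]
      linarith
    have hlogη : 2*Real.log η ≤ Real.log (δ^2+η^2) := by
      have h1 : Real.log (η^2) ≤ Real.log (δ^2+η^2) :=
        Real.log_le_log (pow_pos hη 2) (by linarith [sq_nonneg δ])
      have h2 : Real.log (η^2) = 2*Real.log η := by
        rw [Real.log_pow]; push_cast; ring
      linarith
    have hdd : δ^2/(δ^2+ρ^2) ≤ δ^2/(δ^2+η^2) := by
      refine div_le_div_of_nonneg_left (sq_nonneg δ) hP2 ?_
      nlinarith [pow_le_pow_left₀ hη.le hηρ 2]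
    have hB2 : 2*(Ga (ρ/δ) - 1/2) - 2*(Ga (η/δ) - 1/2) ≤ Cη := by
      rw [Ga_rw ρ δ hρ hδ0, Ga_rw η δ hη hδ0, hCηdef]
      nlinarith [sq_nonneg (δ^2/(δ^2+η^2))]
    have hEb := err_bound g hg M ε' η ρ δ hM hε'pos.le hη hηρ hδ0 hηg
    have hEbound : |∫ t in Metric.ball (0:E4) (ρ/δ),
          (g (δ • t) - g 0) * ((‖t‖^2-1)/(1+‖t‖^2)^3)|
        ≤ ε'*(π^2*(Real.log (1+ρ^2) + 2*|Real.log δ|)) + 2*M*(π^2*Cη) := by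
      refine le_trans hEb ?_
      have e1 : ε' * (2*π^2*(Ga (ρ/δ) - 1/2))
          ≤ ε'*(π^2*(Real.log (1+ρ^2) + 2*|Real.log δ|)) := by
        calc ε' * (2*π^2*(Ga (ρ/δ) - 1/2)) = ε' * π^2 * (2*(Ga (ρ/δ) - 1/2)) := by ring
          _ ≤ ε' * π^2 * (Real.log (1+ρ^2) + 2*|Real.log δ|) :=
            mul_le_mul_of_nonneg_left hA (by positivity)
          _ = ε'*(π^2*(Real.log (1+ρ^2) + 2*|Real.log δ|)) := by ring
      have e2 : 2*M*((2*π^2*(Ga (ρ/δ) - 1/2)) - (2*π^2*(Ga (η/δ) - 1/2)))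
          ≤ 2*M*(π^2*Cη) := by
        calc 2*M*((2*π^2*(Ga (ρ/δ) - 1/2)) - (2*π^2*(Ga (η/δ) - 1/2)))
            = 2*M*π^2*(2*(Ga (ρ/δ) - 1/2) - 2*(Ga (η/δ) - 1/2)) := by ring
          _ ≤ 2*M*π^2*Cη := mul_le_mul_of_nonneg_left hB2 (by positivity)
          _ = 2*M*(π^2*Cη) := by ring
      linarith
    have hfinal : ‖(1 / |Real.log δ|) * ∫ t in Metric.ball (0:E4) (ρ/δ),
          (g (δ • t) - g 0) * ((‖t‖^2-1)/(1+‖t‖^2)^3)‖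
        ≤ C1*(1/|Real.log δ|) + 2*ε'*π^2 := by
      rw [Real.norm_eq_abs, abs_mul, abs_of_pos (by positivity : (0:ℝ) < 1/|Real.log δ|)]
      calc (1/|Real.log δ|) * |∫ t in Metric.ball (0:E4) (ρ/δ),
            (g (δ • t) - g 0) * ((‖t‖^2-1)/(1+‖t‖^2)^3)|
          ≤ (1/|Real.log δ|) * (ε'*(π^2*(Real.log (1+ρ^2) + 2*|Real.log δ|)) + 2*M*(π^2*Cη)) :=
            mul_le_mul_of_nonneg_left hEbound (by positivity)
        _ = C1*(1/|Real.log δ|) + 2*ε'*π^2 := by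
            rw [hC1def]
            field_simp
            ring
    exact lt_of_le_of_lt hfinal hBδ
  have := T1.add T2
  simpa using this
end
end

section
/- Let τ, V : ℝ⁴ → ℝ be twice continuously differentiable, let c > 0, and let ξ₀ ∈ ℝ⁴ satisfy V(ξ₀) > 0 and τ(ξ₀) ≠ 0. Assume ξ₀ is a non-degenerate critical point of f = τ/V, i.e. ∇f(ξ₀) = 0 and the Hessian D²f(ξ₀) is invertible. Set t₀ = c·τ(ξ₀)/V(ξ₀) and define F : ℝ × ℝ⁴ → ℝ × ℝ⁴ by F(t,ξ) = ( c·τ(ξ) − t·V(ξ), c·∇τ(ξ) − t·∇V(ξ) ). Then F(t₀,ξ₀) = 0 and the total derivative DF(t₀,ξ₀) : ℝ × ℝ⁴ → ℝ × ℝ⁴ is an invertible linear map. -/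
open MeasureTheory Real

noncomputable section

open InnerProductSpace in
/-- The map sending a real continuous linear functional on `E4` to its Riesz representative,
as a continuous linear map. -/
noncomputable def rieszCLM : (E4 →L[ℝ] ℝ) →L[ℝ] E4 :=
  { toFun := (toDual ℝ E4).symm
    map_add' := fun x y => map_add _ x y
    map_smul' := fun r L => by
      simp [LinearIsometryEquiv.map_smulₛₗ, starRingEnd_apply]
    cont := (toDual ℝ E4).symm.continuous }

lemma rieszCLM_fderiv (φ : E4 → ℝ) (x : E4) : gradient φ x = rieszCLM (fderiv ℝ φ x) := rfl

lemma hasGradientAt_div' {τ V : E4 → ℝ} {x : E4} (hτ : DifferentiableAt ℝ τ x)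
    (hV : DifferentiableAt ℝ V x) (hx : V x ≠ 0) :
    HasGradientAt (fun y => τ y / V y)
      ((V x)⁻¹ • gradient τ x - (τ x / V x ^ 2) • gradient V x) x := by
  have hinv : HasFDerivAt (fun y => (V y)⁻¹)
      ((ContinuousLinearMap.smulRight (1 : ℝ →L[ℝ] ℝ) (-(V x ^ 2)⁻¹)).comp (fderiv ℝ V x)) x :=
    (hasFDerivAt_inv hx).comp x hV.hasFDerivAt
  have h1 : HasFDerivAt (fun y => τ y / V y)
      ((V x)⁻¹ • fderiv ℝ τ x - (τ x / V x ^ 2) • fderiv ℝ V x) x := by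
    have h2 := hτ.hasFDerivAt.mul hinv
    simp only [div_eq_mul_inv]
    refine h2.congr_fderiv ?_
    ext h
    simp only [ContinuousLinearMap.add_apply, ContinuousLinearMap.smul_apply,
      ContinuousLinearMap.comp_apply, ContinuousLinearMap.smulRight_apply,
      ContinuousLinearMap.one_apply, ContinuousLinearMap.sub_apply, smul_eq_mul]
    ring
  have h3 := (hasFDerivAt_iff_hasGradientAt).mp h1
  convert h3 using 1
  simp [gradient, map_sub, LinearIsometryEquiv.map_smulₛₗ, starRingEnd_apply]

/-- If ξ₀ is a non-degenerate critical point of f = τ/V with V(ξ₀) > 0 and τ(ξ₀) ≠ 0,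
and t₀ = c·τ(ξ₀)/V(ξ₀), then the map F(t,ξ) = (c·τ(ξ) − t·V(ξ), c·∇τ(ξ) − t·∇V(ξ))
vanishes at (t₀,ξ₀) and its total derivative there is invertible. -/
theorem reduced_map_nondegenerate (τ V : E4 → ℝ) (hτ : ContDiff ℝ 2 τ)
    (hV : ContDiff ℝ 2 V) (c : ℝ) (hc : 0 < c) (ξ₀ : E4) (hVpos : 0 < V ξ₀)
    (hτne : τ ξ₀ ≠ 0)
    (hcrit : gradient (fun x => τ x / V x) ξ₀ = 0)
    (hnondeg : Function.Bijective (fderiv ℝ (gradient fun x => τ x / V x) ξ₀)) :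
    (fun p : ℝ × E4 => (c * τ p.2 - p.1 * V p.2, c • gradient τ p.2 - p.1 • gradient V p.2))
        (c * τ ξ₀ / V ξ₀, ξ₀) = 0 ∧
      Function.Bijective
        (fderiv ℝ
          (fun p : ℝ × E4 =>
            (c * τ p.2 - p.1 * V p.2, c • gradient τ p.2 - p.1 • gradient V p.2))
          (c * τ ξ₀ / V ξ₀, ξ₀)) := by
  have hV0 : V ξ₀ ≠ 0 := ne_of_gt hVpos
  have hc0 : c ≠ 0 := ne_of_gt hc
  have hcV : c * V ξ₀ ≠ 0 := mul_ne_zero hc0 hV0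
  have hτd : Differentiable ℝ τ := hτ.differentiable two_ne_zero
  have hVd : Differentiable ℝ V := hV.differentiable two_ne_zero
  set t₀ : ℝ := c * τ ξ₀ / V ξ₀ with ht₀
  -- differentiability of the gradients
  have hgτ1 : ContDiff ℝ 1 (gradient τ) := by
    have : ContDiff ℝ 1 fun x => rieszCLM (fderiv ℝ τ x) :=
      rieszCLM.contDiff.comp (hτ.fderiv_right le_rfl)
    simpa [funext (rieszCLM_fderiv τ)] using this
  have hgV1 : ContDiff ℝ 1 (gradient V) := by
    have : ContDiff ℝ 1 fun x => rieszCLM (fderiv ℝ V x) :=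
      rieszCLM.contDiff.comp (hV.fderiv_right le_rfl)
    simpa [funext (rieszCLM_fderiv V)] using this
  have hDgτ : DifferentiableAt ℝ (gradient τ) ξ₀ := (hgτ1.differentiable one_ne_zero) ξ₀
  have hDgV : DifferentiableAt ℝ (gradient V) ξ₀ := (hgV1.differentiable one_ne_zero) ξ₀
  -- critical point relations
  have hgrad0 : (V ξ₀)⁻¹ • gradient τ ξ₀ - (τ ξ₀ / V ξ₀ ^ 2) • gradient V ξ₀ = 0 := by
    rw [← (hasGradientAt_div' (hτd ξ₀) (hVd ξ₀) hV0).gradient]; exact hcrit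
  have hgrel : gradient τ ξ₀ = (τ ξ₀ / V ξ₀) • gradient V ξ₀ := by
    have h1 := sub_eq_zero.mp hgrad0
    have h2 := congrArg (fun y : E4 => (V ξ₀) • y) h1
    have e1 : V ξ₀ * (τ ξ₀ / V ξ₀ ^ 2) = τ ξ₀ / V ξ₀ := by field_simp
    simpa [smul_smul, mul_inv_cancel₀ hV0, e1] using h2
  have hDrel : fderiv ℝ τ ξ₀ = (τ ξ₀ / V ξ₀) • fderiv ℝ V ξ₀ := by
    have h1 : fderiv ℝ τ ξ₀ = (InnerProductSpace.toDual ℝ E4) (gradient τ ξ₀) :=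
      ((InnerProductSpace.toDual ℝ E4).apply_symm_apply (fderiv ℝ τ ξ₀)).symm
    rw [h1, hgrel, LinearIsometryEquiv.map_smulₛₗ]
    simp [starRingEnd_apply, gradient]
  have hDrelh : ∀ h : E4, fderiv ℝ τ ξ₀ h = (τ ξ₀ / V ξ₀) * fderiv ℝ V ξ₀ h := by
    intro h; rw [hDrel]; simp
  -- the Hessian of τ/V at ξ₀
  have ha : HasFDerivAt (fun x => (V x)⁻¹)
      ((ContinuousLinearMap.smulRight (1 : ℝ →L[ℝ] ℝ) (-(V ξ₀ ^ 2)⁻¹)).comp (fderiv ℝ V ξ₀)) ξ₀ :=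
    (hasFDerivAt_inv hV0).comp ξ₀ (hVd ξ₀).hasFDerivAt
  have hb := ((hτd ξ₀).hasFDerivAt.mul ha).mul ha
  have hG := (ha.smul hDgτ.hasFDerivAt).sub (hb.smul hDgV.hasFDerivAt)
  have hUne : ∀ᶠ x in nhds ξ₀, V x ≠ 0 := (hVd.continuous.continuousAt).eventually_ne hV0
  have heq : (gradient fun x => τ x / V x) =ᶠ[nhds ξ₀]
      fun x => (V x)⁻¹ • gradient τ x - (τ x * (V x)⁻¹ * (V x)⁻¹) • gradient V x := by
    filter_upwards [hUne] with x hx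
    rw [(hasGradientAt_div' (hτd x) (hVd x) hx).gradient]
    have hsc : τ x / V x ^ 2 = τ x * (V x)⁻¹ * (V x)⁻¹ := by
      rw [div_eq_mul_inv, sq, mul_inv]; ring
    rw [hsc]
  have hHfeq := heq.fderiv_eq.trans hG.fderiv
  -- the key identity
  have key : ∀ h : E4, c • fderiv ℝ (gradient τ) ξ₀ h - t₀ • fderiv ℝ (gradient V) ξ₀ h
      = (c * V ξ₀) • fderiv ℝ (gradient fun x => τ x / V x) ξ₀ h := by
    intro h
    rw [hHfeq]
    simp only [ContinuousLinearMap.sub_apply, ContinuousLinearMap.add_apply,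
      ContinuousLinearMap.smul_apply, ContinuousLinearMap.comp_apply,
      ContinuousLinearMap.smulRight_apply, ContinuousLinearMap.one_apply, smul_eq_mul, Pi.mul_apply]
    rw [hgrel, hDrelh, ht₀]
    match_scalars <;> field_simp <;> ring
  -- derivative of the full map F
  have hτ2 : HasFDerivAt (fun p : ℝ × E4 => τ p.2)
      ((fderiv ℝ τ ξ₀).comp (ContinuousLinearMap.snd ℝ ℝ E4)) (t₀, ξ₀) :=
    (hτd ξ₀).hasFDerivAt.comp (t₀, ξ₀) hasFDerivAt_snd
  have hV2 : HasFDerivAt (fun p : ℝ × E4 => V p.2)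
      ((fderiv ℝ V ξ₀).comp (ContinuousLinearMap.snd ℝ ℝ E4)) (t₀, ξ₀) :=
    (hVd ξ₀).hasFDerivAt.comp (t₀, ξ₀) hasFDerivAt_snd
  have hgτ2 : HasFDerivAt (fun p : ℝ × E4 => gradient τ p.2)
      ((fderiv ℝ (gradient τ) ξ₀).comp (ContinuousLinearMap.snd ℝ ℝ E4)) (t₀, ξ₀) :=
    HasFDerivAt.comp (g := gradient τ) (f := Prod.snd) (t₀, ξ₀) hDgτ.hasFDerivAt hasFDerivAt_snd
  have hgV2 : HasFDerivAt (fun p : ℝ × E4 => gradient V p.2)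
      ((fderiv ℝ (gradient V) ξ₀).comp (ContinuousLinearMap.snd ℝ ℝ E4)) (t₀, ξ₀) :=
    HasFDerivAt.comp (g := gradient V) (f := Prod.snd) (t₀, ξ₀) hDgV.hasFDerivAt hasFDerivAt_snd
  have hF1 := (hτ2.const_mul c).sub (hasFDerivAt_fst.mul hV2)
  have hF2 := (hgτ2.const_smul c).sub (hasFDerivAt_fst.smul hgV2)
  have hF := hF1.prodMk hF2
  refine ⟨?_, ?_⟩
  · simp only [Prod.mk_eq_zero]
    constructor
    · rw [ht₀]; field_simp; ring
    · rw [hgrel, smul_smul, show c * (τ ξ₀ / V ξ₀) = t₀ by rw [ht₀]; ring]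
      exact sub_self _
  · set L := fderiv ℝ
      (fun p : ℝ × E4 =>
        (c * τ p.2 - p.1 * V p.2, c • gradient τ p.2 - p.1 • gradient V p.2))
      (t₀, ξ₀) with hLdef
    have hL := hLdef.trans hF.fderiv
    have happ : ∀ q : ℝ × E4, L q =
        (-(V ξ₀ * q.1),
          (c * V ξ₀) • fderiv ℝ (gradient fun x => τ x / V x) ξ₀ q.2
            - q.1 • gradient V ξ₀) := by
      rintro ⟨s, h⟩
      rw [hL]
      simp only [ContinuousLinearMap.prod_apply, ContinuousLinearMap.sub_apply,
        ContinuousLinearMap.add_apply, ContinuousLinearMap.smul_apply,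
        ContinuousLinearMap.comp_apply, ContinuousLinearMap.coe_fst',
        ContinuousLinearMap.coe_snd', ContinuousLinearMap.smulRight_apply, smul_eq_mul,
        Prod.mk.injEq]
      constructor
      · rw [hDrelh, ht₀]; ring
      · rw [← key]
        abel
    constructor
    · intro p q hpq
      have h0 : L (p - q) = 0 := by rw [map_sub, hpq, sub_self]
      rw [happ, Prod.mk_eq_zero] at h0
      obtain ⟨h1, h2⟩ := h0
      have hs : (p - q).1 = 0 := (mul_eq_zero.mp (neg_eq_zero.mp h1)).resolve_left hV0
      rw [hs, zero_smul, sub_zero] at h2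
      have h3 : fderiv ℝ (gradient fun x => τ x / V x) ξ₀ (p - q).2 = 0 :=
        (smul_eq_zero.mp h2).resolve_left hcV
      have h4 : (p - q).2 = 0 := hnondeg.1 (by rw [h3, map_zero])
      have h5 : p - q = 0 := by
        rw [← Prod.mk.eta (p := p - q), Prod.mk_eq_zero]; exact ⟨hs, h4⟩
      exact sub_eq_zero.mp h5
    · rintro ⟨a, b⟩
      obtain ⟨h, hh⟩ :=
        hnondeg.2 ((c * V ξ₀)⁻¹ • (b + (-(a / V ξ₀)) • gradient V ξ₀))
      refine ⟨(-(a / V ξ₀), h), ?_⟩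
      rw [happ]
      simp only [hh]
      rw [Prod.mk.injEq]
      constructor
      · field_simp
      · rw [smul_smul, mul_inv_cancel₀ hcV, one_smul]
        abel
end
end
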